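/- Let α be a positive real number with α ≠ 1. Suppose u : [0,1] → ℝ is a Lebesgue-measurable function satisfying u(1-x) + (1-x)^α · u(y/(1-x)) = u(y) + (1-y)^α · u((1-x-y)/(1-y)) for all x, y ∈ [0,1) with x + y ≤ 1. Then there exists a real constant λ such that u(x) = λ · (1/(1-α)) · (x^α + (1-x)^α - 1) for all x ∈ [0,1]. -/

import Mathlib

open Real MeasureTheory Set Pointwise

section FEaux
variable {α : ℝ} {u g : ℝ → ℝ}

private lemma chain_c2 (hα : 0 < α) {D : ℝ → ℝ} (hhalf : D (1/2) = 0)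
    (hE : ∀ a t : ℝ, 0 < a → a ≤ 1 → 0 ≤ t → t ≤ 1 → a*t < 1 →
      D (a*t) = D a + a^α * D t - (1-a*t)^α * D (a*(1-t)/(1-a*t))) :
    ∀ a : ℝ, 0 < a → a ≤ 1 → ((2-a)/2)^α * D (a/(2-a)) = D a - D (a/2) := by
  intro a ha0 ha1
  have h := hE a (1/2) ha0 ha1 (by norm_num) (by norm_num) (by nlinarith)
  have hne : (2:ℝ) - a ≠ 0 := by linarith
  have h1 : a * (1/2) = a/2 := by ring
  rw [h1] at h
  have h2 : (1 - a/2 : ℝ) = (2-a)/2 := by ring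
  rw [h2] at h
  have h3 : a * (1 - 1/2) / ((2-a)/2) = a/(2-a) := by
    field_simp
    norm_num
  rw [h3, hhalf] at h
  linarith [h]

private lemma chain_c3 (hα : 0 < α) {D : ℝ → ℝ} (hhalf : D (1/2) = 0)
    (hE : ∀ a t : ℝ, 0 < a → a ≤ 1 → 0 ≤ t → t ≤ 1 → a*t < 1 →
      D (a*t) = D a + a^α * D t - (1-a*t)^α * D (a*(1-t)/(1-a*t))) :
    ∀ a : ℝ, 0 ≤ a → a ≤ 1 → D (a/2) = (1/2)^α * D a - ((2-a)/2)^α * D ((1-a)/(2-a)) := by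
  intro a ha0 ha1
  have h := hE (1/2) a (by norm_num) (by norm_num) ha0 ha1 (by nlinarith)
  have hne : (2:ℝ) - a ≠ 0 := by linarith
  have h1 : (1:ℝ)/2 * a = a/2 := by ring
  rw [h1] at h
  have h2 : (1 - a/2 : ℝ) = (2-a)/2 := by ring
  rw [h2] at h
  have h3 : (1:ℝ)/2 * (1 - a) / ((2-a)/2) = (1-a)/(2-a) := by
    field_simp
  rw [h3, hhalf] at h
  linarith [h]


private lemma chain_b_facts {a : ℝ} (ha0 : 0 < a) (ha1 : a < 1) :
    0 < 2*(1-a)/(2-a) ∧ 2*(1-a)/(2-a) ≤ 1 ∧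
    (2 - 2*(1-a)/(2-a))/2 = 1/(2-a) ∧
    (2*(1-a)/(2-a))/(2 - 2*(1-a)/(2-a)) = 1-a ∧
    (2*(1-a)/(2-a))/2 = (1-a)/(2-a) ∧
    2*(1-a)/(2-a) = 1 - a/(2-a) := by
  have hne : (2:ℝ) - a ≠ 0 := by linarith
  have h2 : (0:ℝ) < 2 - a := by linarith
  have hb2 : (2 - 2*(1-a)/(2-a)) = a/(2-a) + 1 := by field_simp; ring
  refine ⟨div_pos (by linarith) h2, ?_, by field_simp; ring, ?_, by ring, by field_simp; ring⟩
  · rw [div_le_one h2]; linarith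
  · rw [hb2]
    have : a/(2-a) + 1 ≠ 0 := by positivity
    field_simp
    ring


private lemma hPQ_fact (α : ℝ) {a : ℝ} (ha1 : a < 1) :
    ((2-a)/2)^α * (1/(2-a))^α = ((1:ℝ)/2)^α := by
  have h2 : (0:ℝ) < 2 - a := by linarith
  rw [← Real.mul_rpow (by linarith) (by positivity)]
  congr 1
  field_simp


private lemma half_rpow_ne {β γ : ℝ} (h : β ≠ γ) : ((1:ℝ)/2)^β ≠ ((1:ℝ)/2)^γ := by
  rcases h.lt_or_gt with hl|hl
  · exact ne_of_gt (Real.rpow_lt_rpow_of_exponent_gt (by norm_num) (by norm_num) hl)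
  · exact ne_of_lt (Real.rpow_lt_rpow_of_exponent_gt (by norm_num) (by norm_num) hl)

private lemma chain_sym (hα : 0 < α) (hα1 : α ≠ 1) {D : ℝ → ℝ}
    (hhalf : D (1/2) = 0) (hD0 : D 0 = 0) (hD1 : D 1 = 0)
    (hsym : ∀ a : ℝ, 0 ≤ a → a ≤ 1 → D (1-a) = D a)
    (hE : ∀ a t : ℝ, 0 < a → a ≤ 1 → 0 ≤ t → t ≤ 1 → a*t < 1 →
      D (a*t) = D a + a^α * D t - (1-a*t)^α * D (a*(1-t)/(1-a*t))) :
    ∀ a : ℝ, 0 ≤ a → a ≤ 1 → D a = 0 := by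
  intro a ha0 ha1
  rcases eq_or_lt_of_le ha0 with h0|h0
  · rw [← h0]; exact hD0
  rcases eq_or_lt_of_le ha1 with h1|h1
  · rw [h1]; exact hD1
  have hne : (0:ℝ) < 2 - a := by linarith
  have c2a := chain_c2 hα hhalf hE a h0 (le_of_lt h1)
  have c3a := chain_c3 hα hhalf hE a ha0 ha1
  obtain ⟨hb0, hb1, r1, r2, r3, r4⟩ := chain_b_facts h0 h1
  have c2b := chain_c2 hα hhalf hE _ hb0 hb1
  rw [r1, r2, r3] at c2b
  have hsa : D (1-a) = D a := hsym a ha0 ha1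
  have hDb : D (2*(1-a)/(2-a)) = D (a/(2-a)) := by
    rw [r4]
    exact hsym _ (by positivity) (by rw [div_le_one hne]; linarith)
  rw [hsa, hDb] at c2b
  -- c2b : (1/(2-a))^α * D a = D (a/(2-a)) - D ((1-a)/(2-a))
  have hPQ := hPQ_fact α h1
  have key : (2 * ((1:ℝ)/2)^α - 1) * D a = 0 := by
    linear_combination c2a - c3a + ((2-a)/2)^α * c2b - D a * hPQ
  have hR : 2 * ((1:ℝ)/2)^α - 1 ≠ 0 := by
    have := half_rpow_ne hα1
    rw [Real.rpow_one] at this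
    intro hcon
    apply this
    linarith
  exact (mul_eq_zero.mp key).resolve_left hR


private lemma chain_anti (hα : 0 < α) (hα2 : α ≠ 2) {D : ℝ → ℝ}
    (hhalf : D (1/2) = 0) (hD0 : D 0 = 0) (hD1 : D 1 = 0)
    (hsym : ∀ a : ℝ, D (1-a) = - D a)
    (hE : ∀ a t : ℝ, 0 < a → a ≤ 1 → 0 ≤ t → t ≤ 1 → a*t < 1 →
      D (a*t) = D a + a^α * D t - (1-a*t)^α * D (a*(1-t)/(1-a*t))) :
    ∀ a : ℝ, 0 ≤ a → a ≤ 1 → D a = 0 := by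
  -- Step 1 : halving identity
  have R2 : ∀ a : ℝ, 0 ≤ a → a ≤ 1 → D a = 2 * D (a/2) := by
    intro a ha0 ha1
    rcases eq_or_lt_of_le ha0 with h0|h0
    · rw [← h0]; norm_num [hD0]
    rcases eq_or_lt_of_le ha1 with h1|h1
    · rw [h1]; rw [hD1]; norm_num; rw [show (1:ℝ)/2 = 1/2 by norm_num] at hhalf; linarith [hhalf]
    have hne : (0:ℝ) < 2 - a := by linarith
    have c2a := chain_c2 hα hhalf hE a h0 (le_of_lt h1)
    have c3a := chain_c3 hα hhalf hE a ha0 ha1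
    obtain ⟨hb0, hb1, r1, r2, r3, r4⟩ := chain_b_facts h0 h1
    have c2b := chain_c2 hα hhalf hE _ hb0 hb1
    rw [r1, r2, r3] at c2b
    have hsa : D (1-a) = -D a := hsym a
    have hDb : D (2*(1-a)/(2-a)) = -D (a/(2-a)) := by rw [r4]; exact hsym _
    rw [hsa, hDb] at c2b
    have hPQ := hPQ_fact α h1
    linear_combination (-1 : ℝ) * c2a - c3a + ((2-a)/2)^α * c2b + D a * hPQ
  -- Step 2 : conclude
  intro a ha0 ha1
  rcases eq_or_lt_of_le ha0 with h0|h0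
  · rw [← h0]; exact hD0
  rcases eq_or_lt_of_le ha1 with h1|h1
  · rw [h1]; exact hD1
  have hne : (0:ℝ) < 2 - a := by linarith
  have c2a := chain_c2 hα hhalf hE a h0 (le_of_lt h1)
  have c3a := chain_c3 hα hhalf hE a ha0 ha1
  obtain ⟨hb0, hb1, r1, r2, r3, r4⟩ := chain_b_facts h0 h1
  have c2b := chain_c2 hα hhalf hE _ hb0 hb1
  rw [r1, r2, r3] at c2b
  have hsa : D (1-a) = -D a := hsym a
  rw [hsa] at c2b
  -- use R2 at b
  have hRb := R2 _ (le_of_lt hb0) hb1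
  rw [r3] at hRb
  -- c2b : (1/(2-a))^α * (-D a) = D b - D ((1-a)/(2-a)), hRb : D b = 2 * D ((1-a)/(2-a))
  have hR2a := R2 a ha0 ha1
  have hPQ := hPQ_fact α h1
  have key : (1 - 4 * ((1:ℝ)/2)^α) * D a = 0 := by
    linear_combination 2*((2-a)/2)^α * c2b + 2*((2-a)/2)^α * hRb + 2 * c3a + hR2a + 2 * D a * hPQ
  have hR : 1 - 4 * ((1:ℝ)/2)^α ≠ 0 := by
    have := half_rpow_ne (show α ≠ (2:ℝ) from hα2)
    rw [show ((1:ℝ)/2)^(2:ℝ) = 1/4 by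
      rw [show (2:ℝ) = ((2:ℕ):ℝ) by norm_num, Real.rpow_natCast]; norm_num] at this
    intro hcon; apply this; linarith
  exact (mul_eq_zero.mp key).resolve_left hR


private lemma u_zero (hα : 0 < α)
    (heq : ∀ x y : ℝ, 0 ≤ x → x < 1 → 0 ≤ y → y < 1 → x + y ≤ 1 →
      u (1 - x) + (1 - x) ^ α * u (y / (1 - x))
        = u y + (1 - y) ^ α * u ((1 - x - y) / (1 - y))) :
    u 0 = 0 := by
  have h := heq (1/2) 0 (by norm_num) (by norm_num) (by norm_num) (by norm_num) (by norm_num)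
  norm_num at h
  have hlt : ((1:ℝ)/2) ^ α < 1 := Real.rpow_lt_one (by norm_num) (by norm_num) hα
  -- h : u (1/2) + (1/2)^α * u 0 = u 0 + u (1/2)  (roughly)
  nlinarith [h]

private lemma u_one (hα : 0 < α)
    (heq : ∀ x y : ℝ, 0 ≤ x → x < 1 → 0 ≤ y → y < 1 → x + y ≤ 1 →
      u (1 - x) + (1 - x) ^ α * u (y / (1 - x))
        = u y + (1 - y) ^ α * u ((1 - x - y) / (1 - y))) :
    u 1 = 0 := by
  have h := heq 0 (1/2) (by norm_num) (by norm_num) (by norm_num) (by norm_num) (by norm_num)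
  norm_num at h
  have hlt : ((1:ℝ)/2) ^ α < 1 := Real.rpow_lt_one (by norm_num) (by norm_num) hα
  nlinarith [h]


private lemma g_eqA (hα : 0 < α)
    (heq : ∀ x y : ℝ, 0 ≤ x → x < 1 → 0 ≤ y → y < 1 → x + y ≤ 1 →
      u (1 - x) + (1 - x) ^ α * u (y / (1 - x))
        = u y + (1 - y) ^ α * u ((1 - x - y) / (1 - y)))
    (hg : ∀ x, g x = u x - u (1-x)) :
    ∀ x y : ℝ, 0 ≤ x → x < 1 → 0 ≤ y → y < 1 → x + y ≤ 1 →
      (1-x)^α * g (y/(1-x)) + (1-y)^α * g (x/(1-y)) = g x + g y := by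
  intro x y hx0 hx1 hy0 hy1 hxy
  have e1 := heq x y hx0 hx1 hy0 hy1 hxy
  have e2 := heq y x hy0 hy1 hx0 hx1 (by linarith)
  have hx1' : (1:ℝ) - x ≠ 0 := by linarith
  have hy1' : (1:ℝ) - y ≠ 0 := by linarith
  have r1 : (1 - x - y)/(1-y) = 1 - x/(1-y) := by field_simp; ring
  have r2 : (1 - y - x)/(1-x) = 1 - y/(1-x) := by field_simp; ring
  rw [r1] at e1
  rw [r2] at e2
  simp only [hg]
  linear_combination e1 + e2


private lemma g_eqE (hα : 0 < α)
    (hA : ∀ x y : ℝ, 0 ≤ x → x < 1 → 0 ≤ y → y < 1 → x + y ≤ 1 →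
      (1-x)^α * g (y/(1-x)) + (1-y)^α * g (x/(1-y)) = g x + g y)
    (hanti : ∀ x, g (1-x) = -g x) (hg1 : g 1 = 0) :
    ∀ a t : ℝ, 0 < a → a ≤ 1 → 0 ≤ t → t ≤ 1 → a*t < 1 →
      g (a*t) = g a + a^α * g t - (1-a*t)^α * g (a*(1-t)/(1-a*t)) := by
  intro a t ha0 ha1 ht0 ht1 hat
  have hA' := hA (1-a) (a*t) (by linarith) (by linarith) (by positivity) hat
    (by nlinarith)
  have r0 : (1:ℝ) - (1-a) = a := by ring
  rw [r0] at hA'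
  have hane : a ≠ 0 := ne_of_gt ha0
  have hatne : (1:ℝ) - a*t ≠ 0 := by linarith
  have r1 : a*t/a = t := by field_simp
  rw [r1] at hA'
  have r2 : (1-a)/(1-a*t) = 1 - a*(1-t)/(1-a*t) := by field_simp; ring
  rw [r2, hanti (a*(1-t)/(1-a*t)), hanti a] at hA'
  linarith [hA']


private lemma g_leibniz
    (hA2 : ∀ x y : ℝ, 0 ≤ x → x < 1 → 0 ≤ y → y < 1 → x + y ≤ 1 →
      (1-x)^(2:ℕ) * g (y/(1-x)) + (1-y)^(2:ℕ) * g (x/(1-y)) = g x + g y)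
    (hanti : ∀ x, g (1-x) = -g x) (hg0 : g 0 = 0) (hg1 : g 1 = 0) :
    ∀ a t : ℝ, 0 ≤ a → a ≤ 1 → 0 ≤ t → t ≤ 1 → g (a*t) = a * g t + t * g a := by
  -- first: E-relation with exponent 2
  have hE2 : ∀ a t : ℝ, 0 < a → a ≤ 1 → 0 ≤ t → t ≤ 1 → a*t < 1 →
      g (a*t) = g a + a^(2:ℕ) * g t - (1-a*t)^(2:ℕ) * g (a*(1-t)/(1-a*t)) := by
    intro a t ha0 ha1 ht0 ht1 hat
    have hA' := hA2 (1-a) (a*t) (by linarith) (by linarith) (by positivity) hat (by nlinarith)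
    have r0 : (1:ℝ) - (1-a) = a := by ring
    rw [r0] at hA'
    have hane : a ≠ 0 := ne_of_gt ha0
    have hatne : (1:ℝ) - a*t ≠ 0 := by linarith
    have r1 : a*t/a = t := by field_simp
    rw [r1] at hA'
    have r2 : (1-a)/(1-a*t) = 1 - a*(1-t)/(1-a*t) := by field_simp; ring
    rw [r2, hanti (a*(1-t)/(1-a*t)), hanti a] at hA'
    linarith [hA']
  intro a t ha0 ha1 ht0 ht1
  rcases eq_or_lt_of_le ha0 with h0|h0
  · rw [← h0]; simp [hg0]
  rcases eq_or_lt_of_le ha1 with h1|h1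
  · rw [h1]; simp [hg1]
  rcases eq_or_lt_of_le ht0 with k0|k0
  · rw [← k0]; simp [hg0]
  rcases eq_or_lt_of_le ht1 with k1|k1
  · rw [k1]; simp [hg1]
  -- now 0 < a < 1, 0 < t < 1
  have hat : a*t < 1 := by nlinarith
  have hatne : (0:ℝ) < 1 - a*t := by linarith
  have e1 := hE2 a t h0 ha1 ht0 ht1 hat
  have e2 := hE2 t a k0 ht1 ha0 ha1 (by nlinarith)
  rw [mul_comm t a] at e2
  -- the A-equation at (w, w')
  set w := a*(1-t)/(1-a*t) with hw
  set w' := t*(1-a)/(1-a*t) with hw'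
  have hww : 0 ≤ w := div_nonneg (by nlinarith) (le_of_lt hatne)
  have hww' : 0 ≤ w' := div_nonneg (by nlinarith) (le_of_lt hatne)
  have hwlt : w < 1 := by rw [div_lt_one hatne]; nlinarith
  have hwlt' : w' < 1 := by rw [div_lt_one hatne]; nlinarith
  have hsum : w + w' ≤ 1 := by
    rw [← add_div, div_le_one hatne]; nlinarith
  have hA' := hA2 w w' hww hwlt hww' hwlt' hsum
  have r1 : 1 - w = (1-a)/(1-a*t) := by rw [hw]; field_simp; ring
  have r2 : 1 - w' = (1-t)/(1-a*t) := by rw [hw']; rw [eq_div_iff hatne.ne', sub_mul, div_mul_cancel₀ _ hatne.ne']; ring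
  have hane : (0:ℝ) < 1 - a := by linarith
  have htne : (0:ℝ) < 1 - t := by linarith
  have r3 : w'/((1-a)/(1-a*t)) = t := by rw [hw']; field_simp; exact div_self (ne_of_gt (by linarith))
  have r4 : w/((1-t)/(1-a*t)) = a := by rw [hw]; field_simp
  rw [r1, r2, r3, r4] at hA'
  -- hA' : ((1-a)/(1-a*t))^2 * g t + ((1-t)/(1-a*t))^2 * g a = g w + g w'
  have expand1 : ((1-a)/(1-a*t))^(2:ℕ) = (1-a)^(2:ℕ)/(1-a*t)^(2:ℕ) := by rw [div_pow]
  have expand2 : ((1-t)/(1-a*t))^(2:ℕ) = (1-t)^(2:ℕ)/(1-a*t)^(2:ℕ) := by rw [div_pow]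
  rw [expand1, expand2] at hA'
  have hq : (1 - a*t)^(2:ℕ) ≠ 0 := by positivity
  have hA'' : (1-a)^(2:ℕ) * g t + (1-t)^(2:ℕ) * g a = (1-a*t)^(2:ℕ) * (g w + g w') := by
    field_simp at hA'
    linarith [hA']
  linear_combination (e1 + e2 + hA'') / 2


private lemma g_additive
    (hleib : ∀ a t : ℝ, 0 ≤ a → a ≤ 1 → 0 ≤ t → t ≤ 1 → g (a*t) = a * g t + t * g a)
    (hanti : ∀ x, g (1-x) = -g x) (hg0 : g 0 = 0) :
    ∀ s t : ℝ, 0 ≤ s → 0 ≤ t → s + t ≤ 1 → g (s+t) = g s + g t := by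
  intro s t hs ht hst
  rcases eq_or_lt_of_le (by positivity : (0:ℝ) ≤ s + t) with h0|h0
  · have hs0 : s = 0 := by linarith
    have ht0 : t = 0 := by linarith
    simp [hs0, ht0, hg0]
  have hne : s + t ≠ 0 := ne_of_gt h0
  set p := s/(s+t) with hp
  have hp0 : 0 ≤ p := by positivity
  have hp1 : p ≤ 1 := by rw [hp, div_le_one h0]; linarith
  have l1 := hleib (s+t) p (le_of_lt h0) hst hp0 hp1
  have l2 := hleib (s+t) (1-p) (le_of_lt h0) hst (by linarith) (by linarith)
  have r1 : (s+t) * p = s := by rw [hp]; field_simp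
  have r2 : (s+t) * (1-p) = t := by rw [hp]; field_simp; ring
  rw [r1] at l1
  rw [r2] at l2
  have r3 : g (1-p) = -g p := hanti p
  rw [r3] at l2
  linarith [l1, l2]

private lemma g_nathom
    (hadd : ∀ s t : ℝ, 0 ≤ s → 0 ≤ t → s + t ≤ 1 → g (s+t) = g s + g t)
    (hg0 : g 0 = 0) :
    ∀ n : ℕ, ∀ y : ℝ, 0 ≤ y → (n:ℝ) * y ≤ 1 → g ((n:ℝ)*y) = n * g y := by
  intro n
  induction n with
  | zero => intro y hy hny; simp [hg0]
  | succ n ih =>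
    intro y hy hny
    have hn : (n:ℝ) * y ≤ 1 := by
      have : (n:ℝ) ≤ (n:ℝ)+1 := by linarith
      push_cast at hny ⊢
      nlinarith
    have : ((n:ℝ)+1) * y = (n:ℝ)*y + y := by ring
    push_cast
    rw [this, hadd ((n:ℝ)*y) y (by positivity) hy (by push_cast at hny; nlinarith), ih y hy hn]
    ring

private lemma g_ratzero
    (hadd : ∀ s t : ℝ, 0 ≤ s → 0 ≤ t → s + t ≤ 1 → g (s+t) = g s + g t)
    (hg0 : g 0 = 0) (hg1 : g 1 = 0) :
    ∀ q : ℚ, 0 ≤ (q:ℝ) → (q:ℝ) ≤ 1 → g q = 0 := by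
  have hnat := g_nathom hadd hg0
  intro q hq0 hq1
  have hden : (0:ℝ) < (q.den : ℝ) := by positivity
  have h1n : g (1/(q.den:ℝ)) = 0 := by
    have h := hnat q.den (1/(q.den:ℝ)) (by positivity) (by rw [mul_one_div, div_le_one hden])
    rw [mul_one_div, div_self (ne_of_gt hden), hg1] at h
    exact ((mul_eq_zero.mp h.symm).resolve_left (ne_of_gt hden))
  have hnn : (0:ℤ) ≤ q.num := Rat.num_nonneg.2 (by exact_mod_cast hq0)
  have hnum : (q:ℝ) = (q.num.toNat : ℝ) * (1/(q.den:ℝ)) := by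
    rw [Rat.cast_def, mul_one_div]
    congr 1
    rw [show ((q.num.toNat : ℕ):ℝ) = ((q.num.toNat : ℤ):ℝ) by push_cast; ring, Int.toNat_of_nonneg hnn]
  rw [hnum, hnat _ _ (by positivity) (by rw [← hnum]; exact hq1), h1n, mul_zero]

private lemma g_meas_zero {G0 : ℝ → ℝ} (hG0m : Measurable G0)
    (hG0 : ∀ x : ℝ, 0 ≤ x → x ≤ 1 → G0 x = g x)
    (hadd : ∀ s t : ℝ, 0 ≤ s → 0 ≤ t → s + t ≤ 1 → g (s+t) = g s + g t)
    (hg0 : g 0 = 0) (hg1 : g 1 = 0) :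
    ∀ x : ℝ, 0 ≤ x → x ≤ 1 → g x = 0 := by
  have hnat := g_nathom hadd hg0
  have hrat := g_ratzero hadd hg0 hg1
  set A : ℕ → Set ℝ := fun n => Icc (0:ℝ) (1/2) ∩ {x | |G0 x| ≤ n} with hA
  have measA : ∀ n, MeasurableSet (A n) := by
    intro n
    exact measurableSet_Icc.inter (hG0m.abs measurableSet_Iic)
  have cover : Icc (0:ℝ) (1/2) ⊆ ⋃ n, A n := by
    intro x hx
    exact mem_iUnion.2 ⟨⌈|G0 x|⌉₊, hx, by simp only [mem_setOf_eq]; exact Nat.le_ceil _⟩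
  have pos : ∃ n, 0 < volume (A n) := by
    by_contra hc
    push_neg at hc
    have hz : ∀ n, volume (A n) = 0 := fun n => le_antisymm (hc n) zero_le
    have : volume (Icc (0:ℝ) (1/2)) = 0 := by
      refine le_antisymm ?_ zero_le
      calc volume (Icc (0:ℝ) (1/2)) ≤ volume (⋃ n, A n) := measure_mono cover
        _ = 0 := by simpa using measure_iUnion_null hz
    rw [Real.volume_Icc] at this
    norm_num at this
  obtain ⟨n, hn⟩ := pos
  have hSE : A n - A n ∈ nhds (0:ℝ) :=
    Measure.sub_mem_nhds_zero_of_addHaar_pos volume (A n) (measA n) hn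
  obtain ⟨ε, hε, hball⟩ := Metric.mem_nhds_iff.mp hSE
  have hbound : ∀ t : ℝ, 0 ≤ t → t < ε → |g t| ≤ 2*n := by
    intro t ht0 htε
    have htb : t ∈ Metric.ball (0:ℝ) ε := by
      rw [Metric.mem_ball, dist_zero_right, Real.norm_eq_abs, abs_of_nonneg ht0]
      exact htε
    obtain ⟨a, ha, b, hb, hab⟩ := Set.mem_sub.mp (hball htb)
    obtain ⟨⟨ha0, ha1⟩, haG⟩ := ha
    obtain ⟨⟨hb0, hb1⟩, hbG⟩ := hb
    have hba : b + t = a := by linarith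
    have h1 := hadd b t hb0 ht0 (by rw [hba]; linarith)
    rw [hba] at h1
    have ea : G0 a = g a := hG0 a ha0 (by linarith)
    have eb : G0 b = g b := hG0 b hb0 (by linarith)
    have : g t = G0 a - G0 b := by rw [ea, eb]; linarith
    rw [this]
    calc |G0 a - G0 b| ≤ |G0 a| + |G0 b| := abs_sub _ _
      _ ≤ n + n := add_le_add haG hbG
      _ = 2*n := by ring
  -- conclusion
  intro x hx0 hx1
  by_contra hgx
  have habs : 0 < |g x| := abs_pos.2 hgx
  -- show |g x| ≤ |g x|/2
  have key : |g x| ≤ |g x| / 2 := by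
    set ε' := |g x| / 2 with hε'
    have hε'0 : 0 < ε' := by positivity
    obtain ⟨k, hk⟩ := exists_nat_gt (2*n/ε')
    have hk0 : 0 < (k:ℝ) := lt_of_le_of_lt (by positivity) hk
    set γ := min ε 1 / k with hγ
    have hγ0 : 0 < γ := by
      apply div_pos (lt_min hε one_pos) hk0
    have hsmall : ∀ t : ℝ, 0 ≤ t → t < γ → |g t| ≤ ε' := by
      intro t ht0 htγ
      have hkt1 : (k:ℝ) * t ≤ 1 := by
        have : (k:ℝ) * t < k * γ := by exact mul_lt_mul_of_pos_left htγ hk0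
        rw [hγ, mul_div_cancel₀ _ (ne_of_gt hk0)] at this
        exact le_of_lt (lt_of_lt_of_le this (min_le_right _ _))
      have hktε : (k:ℝ) * t < ε := by
        have : (k:ℝ) * t < k * γ := mul_lt_mul_of_pos_left htγ hk0
        rw [hγ, mul_div_cancel₀ _ (ne_of_gt hk0)] at this
        exact lt_of_lt_of_le this (min_le_left _ _)
      have h1 := hnat k t ht0 hkt1
      have h2 := hbound ((k:ℝ)*t) (by positivity) hktε
      rw [h1, abs_mul, abs_of_nonneg (le_of_lt hk0)] at h2
      have : |g t| ≤ 2*n/k := by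
        rw [le_div_iff₀ hk0]; linarith
      have h3 : 2*(n:ℝ)/k < ε' := by
        rw [div_lt_iff₀ hk0]
        rw [div_lt_iff₀ hε'0] at hk
        linarith
      exact le_of_lt (lt_of_le_of_lt this h3)
    rcases lt_or_ge x γ with hxγ|hxγ
    · exact hsmall x hx0 hxγ
    · obtain ⟨q, hq1, hq2⟩ := exists_rat_btwn (show x - γ < x by linarith)
      have hq0 : (0:ℝ) ≤ q := by linarith
      have hqle : (q:ℝ) ≤ 1 := by linarith
      have h1 := hadd q (x - (q:ℝ)) hq0 (by linarith) (by ring_nf; linarith)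
      have r : (q:ℝ) + (x - q) = x := by ring
      rw [r, hrat q hq0 hqle, zero_add] at h1
      rw [h1]
      exact hsmall _ (by linarith) (by linarith)
  linarith


private lemma eqE_of_funeq {v : ℝ → ℝ}
    (hv : ∀ x y : ℝ, 0 ≤ x → x < 1 → 0 ≤ y → y < 1 → x + y ≤ 1 →
      v (1-x) + (1-x)^α * v (y/(1-x)) = v y + (1-y)^α * v ((1-x-y)/(1-y))) :
    ∀ a t : ℝ, 0 < a → a ≤ 1 → 0 ≤ t → t ≤ 1 → a*t < 1 →
      v (a*t) = v a + a^α * v t - (1-a*t)^α * v (a*(1-t)/(1-a*t)) := by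
  intro a t ha0 ha1 ht0 ht1 hat
  have h := hv (1-a) (a*t) (by linarith) (by linarith) (by positivity) hat (by nlinarith)
  have r0 : (1:ℝ) - (1-a) = a := by ring
  rw [r0] at h
  have hane : a ≠ 0 := ne_of_gt ha0
  have hatne : (1:ℝ) - a*t ≠ 0 := by linarith
  have r1 : a*t/a = t := by field_simp
  rw [r1] at h
  have r2 : (a - a*t)/(1-a*t) = a*(1-t)/(1-a*t) := by
    congr 1
    ring
  rw [r2] at h
  linarith [h]

private lemma s_funeq (hα : 0 < α) (hα1 : α ≠ 1) :
    ∀ x y : ℝ, 0 ≤ x → x < 1 → 0 ≤ y → y < 1 → x + y ≤ 1 →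
      (fun z : ℝ => (1/(1-α)) * (z^α + (1-z)^α - 1)) (1-x)
        + (1-x)^α * (fun z : ℝ => (1/(1-α)) * (z^α + (1-z)^α - 1)) (y/(1-x))
      = (fun z : ℝ => (1/(1-α)) * (z^α + (1-z)^α - 1)) y
        + (1-y)^α * (fun z : ℝ => (1/(1-α)) * (z^α + (1-z)^α - 1)) ((1-x-y)/(1-y)) := by
  intro x y hx0 hx1 hy0 hy1 hxy
  simp only []
  have hx : (0:ℝ) < 1 - x := by linarith
  have hy : (0:ℝ) < 1 - y := by linarith
  have key : ∀ p q : ℝ, 0 ≤ p → 0 < q → q^α * (p/q)^α = p^α := by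
    intro p q hp hq
    rw [Real.div_rpow hp (le_of_lt hq)]
    field_simp [ne_of_gt (Real.rpow_pos_of_pos hq α)]
  have r0 : (1:ℝ) - (1-x) = x := by ring
  have r1 : 1 - y/(1-x) = (1-x-y)/(1-x) := by field_simp
  have r2 : 1 - (1-x-y)/(1-y) = x/(1-y) := by field_simp; ring
  rw [r0, r1, r2]
  have k1 := key y (1-x) hy0 hx
  have k2 := key (1-x-y) (1-x) (by linarith) hx
  have k3 := key (1-x-y) (1-y) (by linarith) hy
  have k4 := key x (1-y) hx0 hy
  linear_combination (1/(1-α)) * (k1 + k2 - k3 - k4)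

end FEaux
/-- For `0 < α`, `α ≠ 1`, any Lebesgue-measurable `u : [0,1] → ℝ` satisfying the
fundamental functional equation is a multiple of `s_α(x) = (1/(1-α)) (x^α + (1-x)^α - 1)`. -/
theorem stmt0 (α : ℝ) (hα : 0 < α) (hα1 : α ≠ 1) (u : ℝ → ℝ)
    (hmeas : Measurable fun x : Set.Icc (0 : ℝ) 1 => u x)
    (heq : ∀ x y : ℝ, 0 ≤ x → x < 1 → 0 ≤ y → y < 1 → x + y ≤ 1 →
      u (1 - x) + (1 - x) ^ α * u (y / (1 - x))
        = u y + (1 - y) ^ α * u ((1 - x - y) / (1 - y))) :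
    ∃ lam : ℝ, ∀ x : ℝ, 0 ≤ x → x ≤ 1 →
      u x = lam * ((1 / (1 - α)) * (x ^ α + (1 - x) ^ α - 1)) := by
  have hu0 : u 0 = 0 := u_zero hα heq
  have hu1 : u 1 = 0 := u_one hα heq
  set g : ℝ → ℝ := fun x => u x - u (1-x) with hgdef
  have hganti : ∀ x : ℝ, g (1-x) = -g x := by
    intro x
    simp only [hgdef]
    rw [show (1:ℝ) - (1-x) = x by ring]
    ring
  have hg0 : g 0 = 0 := by simp only [hgdef]; norm_num [hu0, hu1]
  have hg1 : g 1 = 0 := by simp only [hgdef]; norm_num [hu0, hu1]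
  have hghalf : g (1/2) = 0 := by simp only [hgdef]; norm_num
  have hA := g_eqA hα heq (fun x => rfl)
  have hE := g_eqE hα hA hganti hg1
  -- the antisymmetric part vanishes
  have hgzero : ∀ x : ℝ, 0 ≤ x → x ≤ 1 → g x = 0 := by
    by_cases hα2 : α = 2
    · -- measurable case
      subst hα2
      have hA2 : ∀ x y : ℝ, 0 ≤ x → x < 1 → 0 ≤ y → y < 1 → x + y ≤ 1 →
          (1-x)^(2:ℕ) * g (y/(1-x)) + (1-y)^(2:ℕ) * g (x/(1-y)) = g x + g y := by
        intro x y hx0 hx1 hy0 hy1 hxy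
        have h := hA x y hx0 hx1 hy0 hy1 hxy
        rw [show ((2:ℝ)) = ((2:ℕ):ℝ) by norm_num, Real.rpow_natCast, Real.rpow_natCast] at h
        exact h
      have hleib := g_leibniz hA2 hganti hg0 hg1
      have hadd := g_additive hleib hganti hg0
      -- measurable version of g
      set U : ℝ → ℝ := fun x => u ((Set.projIcc (0:ℝ) 1 zero_le_one x : ℝ)) with hUdef
      have hUm : Measurable U := hmeas.comp continuous_projIcc.measurable
      have hUeq : ∀ x : ℝ, 0 ≤ x → x ≤ 1 → U x = u x := by
        intro x h0 h1
        simp only [hUdef]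
        rw [Set.projIcc_of_mem zero_le_one ⟨h0, h1⟩]
      set G0 : ℝ → ℝ := fun x => U x - U (1-x) with hG0def
      have hG0m : Measurable G0 := hUm.sub (hUm.comp (measurable_const.sub measurable_id))
      have hG0eq : ∀ x : ℝ, 0 ≤ x → x ≤ 1 → G0 x = g x := by
        intro x h0 h1
        simp only [hG0def, hgdef]
        rw [hUeq x h0 h1, hUeq (1-x) (by linarith) (by linarith)]
      exact g_meas_zero hG0m hG0eq hadd hg0 hg1
    · exact chain_anti hα hα2 hghalf hg0 hg1 hganti hE
  have husym : ∀ x : ℝ, 0 ≤ x → x ≤ 1 → u (1-x) = u x := by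
    intro x h0 h1
    have := hgzero x h0 h1
    simp only [hgdef] at this
    linarith
  -- subtract the multiple of s
  set s : ℝ → ℝ := fun z => (1/(1-α)) * (z^α + (1-z)^α - 1) with hsdef
  have hs_half_ne : s (1/2) ≠ 0 := by
    have hhne : 2 * ((1:ℝ)/2)^α - 1 ≠ 0 := by
      have := half_rpow_ne hα1
      rw [Real.rpow_one] at this
      intro hcon; apply this; linarith
    simp only [hsdef]
    rw [show (1:ℝ) - 1/2 = 1/2 by norm_num]
    intro hcon
    rcases mul_eq_zero.mp hcon with h|h
    · rw [div_eq_zero_iff] at h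
      rcases h with h|h
      · norm_num at h
      · exact hα1 (by linarith)
    · apply hhne; linarith
  set lam : ℝ := u (1/2) / s (1/2) with hlamdef
  set D : ℝ → ℝ := fun z => u z - lam * s z with hDdef
  have hDhalf : D (1/2) = 0 := by
    simp only [hDdef, hlamdef]
    rw [div_mul_cancel₀ _ hs_half_ne]
    ring
  have hs0 : s 0 = 0 := by
    simp only [hsdef]
    rw [Real.zero_rpow (ne_of_gt hα)]
    norm_num
  have hs1 : s 1 = 0 := by
    simp only [hsdef]
    rw [show (1:ℝ) - 1 = 0 by ring, Real.zero_rpow (ne_of_gt hα)]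
    norm_num
  have hD0 : D 0 = 0 := by simp only [hDdef]; rw [hs0, hu0]; ring
  have hD1 : D 1 = 0 := by simp only [hDdef]; rw [hs1, hu1]; ring
  have hssym : ∀ a : ℝ, s (1-a) = s a := by
    intro a
    simp only [hsdef]
    rw [show (1:ℝ) - (1-a) = a by ring]
    ring
  have hDsym : ∀ a : ℝ, 0 ≤ a → a ≤ 1 → D (1-a) = D a := by
    intro a h0 h1
    simp only [hDdef]
    rw [husym a h0 h1, hssym a]
  have hDeq : ∀ x y : ℝ, 0 ≤ x → x < 1 → 0 ≤ y → y < 1 → x + y ≤ 1 →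
      D (1-x) + (1-x)^α * D (y/(1-x)) = D y + (1-y)^α * D ((1-x-y)/(1-y)) := by
    intro x y hx0 hx1 hy0 hy1 hxy
    have h1 := heq x y hx0 hx1 hy0 hy1 hxy
    have h2 := s_funeq hα hα1 x y hx0 hx1 hy0 hy1 hxy
    simp only [] at h2
    simp only [hDdef, hsdef]
    linear_combination h1 - lam * h2
  have hE_D := eqE_of_funeq hDeq
  have hDzero := chain_sym hα hα1 hDhalf hD0 hD1 hDsym hE_D
  refine ⟨lam, fun x h0 h1 => ?_⟩
  have := hDzero x h0 h1
  simp only [hDdef, hsdef] at this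
  linarith
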